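/- Let G and G̃ be two finite simple graphs on the same vertex set V, with adjacency matrices A(G) and A(G̃). Then the following are equivalent: (i) the semigroup generated by A(G̃) is dominated by the one generated by A(G), i.e., for all t ≥ 0, all f : V → ℝ with f ≥ 0, and all v ∈ V one has (exp(tA(G̃)) f)(v) ≤ (exp(tA(G)) f)(v); (ii) A(G̃)_{vw} ≤ A(G)_{vw} for all v, w ∈ V; (iii) G̃ is a subgraph of G, i.e., every edge of G̃ is an edge of G. -/

import Mathlib

open NormedSpace Matrix
open scoped Nat

section Aux

variable {V : Type*} [Fintype V] [DecidableEq V]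

private lemma powEntryNonneg {A : Matrix V V ℝ} (hA : ∀ i j, 0 ≤ A i j) :
    ∀ n : ℕ, ∀ i j, 0 ≤ (A ^ n) i j := by
  intro n
  induction n with
  | zero =>
    intro i j
    rw [pow_zero, Matrix.one_apply]
    split_ifs <;> norm_num
  | succ n ih =>
    intro i j
    rw [pow_succ, Matrix.mul_apply]
    exact Finset.sum_nonneg fun k _ => mul_nonneg (ih i k) (hA k j)

private lemma powEntryMono {A B : Matrix V V ℝ} (hA : ∀ i j, 0 ≤ A i j)
    (h : ∀ i j, A i j ≤ B i j) :
    ∀ n : ℕ, ∀ i j, (A ^ n) i j ≤ (B ^ n) i j := by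
  intro n
  induction n with
  | zero => intro i j; rw [pow_zero, pow_zero]
  | succ n ih =>
    intro i j
    rw [pow_succ, pow_succ, Matrix.mul_apply, Matrix.mul_apply]
    refine Finset.sum_le_sum fun k _ => ?_
    have h1 : 0 ≤ (A ^ n) i k := powEntryNonneg hA n i k
    have h2 : 0 ≤ A k j := hA k j
    calc (A ^ n) i k * A k j ≤ (B ^ n) i k * A k j :=
          mul_le_mul_of_nonneg_right (ih i k) h2
      _ ≤ (B ^ n) i k * B k j :=
          mul_le_mul_of_nonneg_left (h k j) (le_trans h1 (ih i k))

/-- The linear map sending a matrix `M` to `(M.mulVec f) v`. -/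
private def mulVecEntryLM (f : V → ℝ) (v : V) : Matrix V V ℝ →ₗ[ℝ] ℝ where
  toFun M := M.mulVec f v
  map_add' A B := by simp [Matrix.add_mulVec]
  map_smul' c A := by simp [Matrix.smul_mulVec]

private lemma exp_mulVec_eq (A : Matrix V V ℝ) (f : V → ℝ) (v : V) (t : ℝ) :
    (exp (t • A)).mulVec f v
      = ∑' (n : ℕ), ((n ! : ℝ))⁻¹ * t ^ n * ((A ^ n).mulVec f v) := by
  letI : SeminormedRing (Matrix V V ℝ) := Matrix.linftyOpSemiNormedRing
  letI : NormedRing (Matrix V V ℝ) := Matrix.linftyOpNormedRing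
  letI : NormedAlgebra ℝ (Matrix V V ℝ) := Matrix.linftyOpNormedAlgebra
  set ψ : Matrix V V ℝ →L[ℝ] ℝ := (mulVecEntryLM f v).toContinuousLinearMap with hψ
  have hsum : Summable fun n : ℕ => ((n ! : ℝ))⁻¹ • (t • A) ^ n :=
    expSeries_summable' (𝕂 := ℝ) (t • A)
  have hexp : exp (t • A) = ∑' (n : ℕ), ((n ! : ℝ))⁻¹ • (t • A) ^ n :=
    congrFun (exp_eq_tsum (𝕂 := ℝ)) (t • A)
  have h1 : (exp (t • A)).mulVec f v = ψ (∑' (n : ℕ), ((n ! : ℝ))⁻¹ • (t • A) ^ n) := by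
    rw [← hexp]; rfl
  rw [h1, ψ.map_tsum hsum]
  refine tsum_congr fun n => ?_
  have : ((n ! : ℝ))⁻¹ • (t • A) ^ n = (((n ! : ℝ))⁻¹ * t ^ n) • A ^ n := by
    rw [smul_pow, smul_smul]
  rw [this, ψ.map_smul, smul_eq_mul]
  rfl

private lemma summable_exp_mulVec (A : Matrix V V ℝ) (f : V → ℝ) (v : V) (t : ℝ) :
    Summable fun n : ℕ => ((n ! : ℝ))⁻¹ * t ^ n * ((A ^ n).mulVec f v) := by
  letI : SeminormedRing (Matrix V V ℝ) := Matrix.linftyOpSemiNormedRing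
  letI : NormedRing (Matrix V V ℝ) := Matrix.linftyOpNormedRing
  letI : NormedAlgebra ℝ (Matrix V V ℝ) := Matrix.linftyOpNormedAlgebra
  set ψ : Matrix V V ℝ →L[ℝ] ℝ := (mulVecEntryLM f v).toContinuousLinearMap with hψ
  have hsum : Summable fun n : ℕ => ((n ! : ℝ))⁻¹ • (t • A) ^ n :=
    expSeries_summable' (𝕂 := ℝ) (t • A)
  have := hsum.map ψ.toLinearMap.toAddMonoidHom ψ.continuous
  refine this.congr fun n => ?_
  have h : ((n ! : ℝ))⁻¹ • (t • A) ^ n = (((n ! : ℝ))⁻¹ * t ^ n) • A ^ n := by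
    rw [smul_pow, smul_smul]
  show ψ (((n ! : ℝ))⁻¹ • (t • A) ^ n) = _
  rw [h, ψ.map_smul, smul_eq_mul]
  rfl

end Aux

/-- For two finite simple graphs `G`, `G'` on the same vertex set `V`, the
following are equivalent: (i) the semigroup generated by `A(G')` is dominated by the one
generated by `A(G)`; (ii) `A(G') ≤ A(G)` entrywise; (iii) every edge of `G'` is an edge of
`G`. -/
theorem adjMatrix_exp_domination_iff_subgraph
    {V : Type*} [Fintype V] [DecidableEq V]
    (G G' : SimpleGraph V) [DecidableRel G.Adj] [DecidableRel G'.Adj] :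
    ((∀ t : ℝ, 0 ≤ t → ∀ f : V → ℝ, (∀ v, 0 ≤ f v) → ∀ v : V,
        (NormedSpace.exp (t • G'.adjMatrix ℝ)).mulVec f v ≤
          (NormedSpace.exp (t • G.adjMatrix ℝ)).mulVec f v) ↔
      (∀ v w : V, G'.adjMatrix ℝ v w ≤ G.adjMatrix ℝ v w)) ∧
    ((∀ v w : V, G'.adjMatrix ℝ v w ≤ G.adjMatrix ℝ v w) ↔
      (∀ e ∈ G'.edgeSet, e ∈ G.edgeSet)) := by
  have hA : ∀ i j, (0 : ℝ) ≤ G.adjMatrix ℝ i j := by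
    intro i j; rw [SimpleGraph.adjMatrix_apply]; split_ifs <;> norm_num
  have hA' : ∀ i j, (0 : ℝ) ≤ G'.adjMatrix ℝ i j := by
    intro i j; rw [SimpleGraph.adjMatrix_apply]; split_ifs <;> norm_num
  constructor
  · constructor
    · -- (i) → (ii): via the derivative at t = 0
      intro hdom v w
      letI : SeminormedRing (Matrix V V ℝ) := Matrix.linftyOpSemiNormedRing
      letI : NormedRing (Matrix V V ℝ) := Matrix.linftyOpNormedRing
      letI : NormedAlgebra ℝ (Matrix V V ℝ) := Matrix.linftyOpNormedAlgebra
      set ψ : Matrix V V ℝ →L[ℝ] ℝ :=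
        (mulVecEntryLM (Pi.single w 1) v).toContinuousLinearMap with hψ
      set g : ℝ → ℝ := fun t =>
        ψ (exp (t • G.adjMatrix ℝ)) - ψ (exp (t • G'.adjMatrix ℝ)) with hg
      have hg0 : g 0 = 0 := by simp [hg]
      have hgnn : ∀ t : ℝ, 0 < t → 0 ≤ g t := by
        intro t ht
        have := hdom t ht.le (Pi.single w 1)
          (fun u => by by_cases h : u = w <;> simp [Pi.single_apply, h]) v
        rw [hg]
        simp only [sub_nonneg]
        exact this
      -- derivative of g at 0
      have hd1 : HasDerivAt (fun u : ℝ => exp (u • G.adjMatrix ℝ))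
          (G.adjMatrix ℝ) 0 := by
        have := hasDerivAt_exp_smul_const (𝕂 := ℝ) (G.adjMatrix ℝ) 0
        simp only [zero_smul, NormedSpace.exp_zero, one_mul] at this
        exact this
      have hd1' : HasDerivAt (fun u : ℝ => exp (u • G'.adjMatrix ℝ))
          (G'.adjMatrix ℝ) 0 := by
        have := hasDerivAt_exp_smul_const (𝕂 := ℝ) (G'.adjMatrix ℝ) 0
        simp only [zero_smul, NormedSpace.exp_zero, one_mul] at this
        exact this
      have hd2 : HasDerivAt (fun u : ℝ => ψ (exp (u • G.adjMatrix ℝ)))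
          (ψ (G.adjMatrix ℝ)) 0 := ψ.hasFDerivAt.comp_hasDerivAt 0 hd1
      have hd2' : HasDerivAt (fun u : ℝ => ψ (exp (u • G'.adjMatrix ℝ)))
          (ψ (G'.adjMatrix ℝ)) 0 := ψ.hasFDerivAt.comp_hasDerivAt 0 hd1'
      have hdg : HasDerivAt g (ψ (G.adjMatrix ℝ) - ψ (G'.adjMatrix ℝ)) 0 := hd2.sub hd2'
      -- the derivative at 0 is nonnegative since g ≥ 0 on (0,∞) and g 0 = 0
      have hslope : Filter.Tendsto (slope g 0) (nhdsWithin 0 (Set.Ioi 0))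
          (nhds (ψ (G.adjMatrix ℝ) - ψ (G'.adjMatrix ℝ))) := by
        have h1 := (hdg.hasDerivWithinAt (s := Set.Ioi 0))
        have h2 := hasDerivWithinAt_iff_tendsto_slope.mp h1
        rwa [Set.diff_singleton_eq_self (by simp)] at h2
      have hnn : 0 ≤ ψ (G.adjMatrix ℝ) - ψ (G'.adjMatrix ℝ) := by
        refine ge_of_tendsto hslope ?_
        filter_upwards [self_mem_nhdsWithin] with t ht
        have ht' : (0 : ℝ) < t := ht
        rw [slope_def_field, div_eq_mul_inv]
        exact mul_nonneg (by simpa [hg0] using hgnn t ht')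
          (inv_nonneg.mpr (by linarith))
      have hψval : ∀ M : Matrix V V ℝ, ψ M = M v w := by
        intro M
        show (mulVecEntryLM (Pi.single w 1) v) M = M v w
        simp [mulVecEntryLM, Matrix.mulVec_single]
      rw [hψval, hψval] at hnn
      linarith
    · -- (ii) → (i): termwise comparison of the exponential series
      intro hle t ht f hf v
      rw [exp_mulVec_eq, exp_mulVec_eq]
      refine Summable.tsum_le_tsum (fun n => ?_) (summable_exp_mulVec _ f v t)
        (summable_exp_mulVec _ f v t)
      have hmv : ((G'.adjMatrix ℝ) ^ n).mulVec f v ≤ ((G.adjMatrix ℝ) ^ n).mulVec f v := by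
        simp only [Matrix.mulVec, dotProduct]
        exact Finset.sum_le_sum fun u _ =>
          mul_le_mul_of_nonneg_right (powEntryMono hA' hle n v u) (hf u)
      have h0 : (0 : ℝ) ≤ ((n ! : ℝ))⁻¹ * t ^ n := by positivity
      exact mul_le_mul_of_nonneg_left hmv h0
  · -- (ii) ↔ (iii)
    constructor
    · intro h e he
      induction e with
      | h v w =>
        rw [SimpleGraph.mem_edgeSet] at he ⊢
        have := h v w
        rw [SimpleGraph.adjMatrix_apply, SimpleGraph.adjMatrix_apply, if_pos he] at this
        by_contra hG
        rw [if_neg hG] at this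
        norm_num at this
    · intro h v w
      rw [SimpleGraph.adjMatrix_apply, SimpleGraph.adjMatrix_apply]
      by_cases hvw : G'.Adj v w
      · have : G.Adj v w := (SimpleGraph.mem_edgeSet G).mp (h s(v, w) ((SimpleGraph.mem_edgeSet G').mpr hvw))
        rw [if_pos hvw, if_pos this]
      · rw [if_neg hvw]
        split_ifs <;> norm_num
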